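/- In the N-class model, for every premium pair c in C² (where C is the set of nondecreasing maps {1,…,N} → [μ, M]), the Bellman operator L_c has a unique fixed point V*_c : X → ℝ, and the maps c ↦ V*_c(n,i) and c ↦ max(0, W↑(n,i;V*_c) − W↓(n,i;V*_c)) are continuous functions of c ∈ C² ⊆ ℝ^{2N}, for every state (n,i) ∈ X. -/

import Mathlib

noncomputable section

open MeasureTheory Set

/-- Cumulative distribution function of the loss: point mass `p₀` at zero plus density `fL`. -/
def lossCdf (p₀ : ℝ) (fL : ℝ → ℝ) (x : ℝ) : ℝ := p₀ + ∫ ℓ in (0:ℝ)..x, fL ℓ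

/-- Rate class after a bonus: `n↓ = max(n−1,1)` (classes are 0-indexed by `Fin N`). -/
def rdown {N : ℕ} (n : Fin N) : Fin N :=
  ⟨n.val - 1, lt_of_le_of_lt (Nat.sub_le _ _) n.isLt⟩

/-- Rate class after a malus: `n↑ = min(n+1,N)` (classes are 0-indexed by `Fin N`). -/
def rup {N : ℕ} (n : Fin N) : Fin N :=
  if h : n.val + 1 < N then ⟨n.val + 1, h⟩ else n

/-- Company-switching probability `σ(n,i)`; company `0` is Company 1, company `1` is
Company 2, and `c i` is the premium schedule of company `i`. -/
def swProb {N : ℕ} (η : ℝ → ℝ) (c : Fin 2 → Fin N → ℝ) (n : Fin N) (i : Fin 2) : ℝ :=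
  if i = 0 then 1 - η (c 1 (rdown n) - c 0 (rdown n))
  else η (c 1 (rdown n) - c 0 (rdown n))

/-- Continuation value after a bonus: `W↓(n,i;v)`. (`i + 1` in `Fin 2` is the other company.) -/
def Wdown {N : ℕ} (η : ℝ → ℝ) (c : Fin 2 → Fin N → ℝ) (v : Fin N × Fin 2 → ℝ)
    (n : Fin N) (i : Fin 2) : ℝ :=
  (1 - swProb η c n i) * v (rdown n, i) + swProb η c n i * v (rdown n, i + 1)

/-- Continuation value after a malus: `W↑(n,i;v)`. -/
def Wup {N : ℕ} (η : ℝ → ℝ) (c : Fin 2 → Fin N → ℝ) (v : Fin N × Fin 2 → ℝ)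
    (n : Fin N) (i : Fin 2) : ℝ :=
  (1 - swProb η c n i) * v (rup n, i) + swProb η c n i * v (rup n, i + 1)

/-- One-step Bellman objective in the reporting barrier `b`. -/
def bellObj {N : ℕ} (p₀ δ : ℝ) (fL η : ℝ → ℝ) (c : Fin 2 → Fin N → ℝ)
    (v : Fin N × Fin 2 → ℝ) (x : Fin N × Fin 2) (b : ℝ) : ℝ :=
  δ * (c x.2 x.1 + (∫ ℓ in (0:ℝ)..b, ℓ * fL ℓ)
    + lossCdf p₀ fL b * Wdown η c v x.1 x.2
    + (1 - lossCdf p₀ fL b) * Wup η c v x.1 x.2)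

/-- The Bellman operator `L_c`. -/
def bellOp {N : ℕ} (p₀ δ : ℝ) (fL η : ℝ → ℝ) (c : Fin 2 → Fin N → ℝ)
    (v : Fin N × Fin 2 → ℝ) (x : Fin N × Fin 2) : ℝ :=
  ⨅ b : {b : ℝ // 0 ≤ b}, bellObj p₀ δ fL η c v x b.1

/-- The set of admissible premium pairs. -/
def premSet (N : ℕ) (μ M : ℝ) : Set (Fin 2 → Fin N → ℝ) :=
  {c | ∀ i : Fin 2, Monotone (c i) ∧ ∀ n : Fin N, c i n ∈ Set.Icc μ M}


section AuxLemmas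

variable {N : ℕ} {p₀ δ μ M : ℝ} {fL η : ℝ → ℝ}

lemma lossCdf_mem_Icc (hp₀ : p₀ ∈ Set.Ioo (0:ℝ) 1)
    (hfpos : ∀ ℓ : ℝ, 0 < ℓ → 0 < fL ℓ) (hfint : IntegrableOn fL (Set.Ioi 0))
    (hftot : ∫ ℓ in Set.Ioi (0:ℝ), fL ℓ = 1 - p₀) {b : ℝ} (hb : 0 ≤ b) :
    lossCdf p₀ fL b ∈ Set.Icc (0:ℝ) 1 := by
  have heq : (∫ ℓ in (0:ℝ)..b, fL ℓ) = ∫ ℓ in Set.Ioc (0:ℝ) b, fL ℓ :=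
    intervalIntegral.integral_of_le hb
  have h0 : 0 ≤ ∫ ℓ in Set.Ioc (0:ℝ) b, fL ℓ :=
    setIntegral_nonneg measurableSet_Ioc fun x hx => (hfpos x hx.1).le
  have h1 : (∫ ℓ in Set.Ioc (0:ℝ) b, fL ℓ) ≤ ∫ ℓ in Set.Ioi (0:ℝ), fL ℓ :=
    setIntegral_mono_set hfint
      ((ae_restrict_iff' measurableSet_Ioi).2 (ae_of_all _ fun x hx => (hfpos x hx).le))
      (HasSubset.Subset.eventuallyLE Set.Ioc_subset_Ioi_self)
  rw [hftot] at h1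
  constructor
  · simp only [lossCdf, heq]; linarith [hp₀.1]
  · simp only [lossCdf, heq]; linarith

lemma meanInt_nonneg (hfpos : ∀ ℓ : ℝ, 0 < ℓ → 0 < fL ℓ) {b : ℝ} (hb : 0 ≤ b) :
    0 ≤ ∫ ℓ in (0:ℝ)..b, ℓ * fL ℓ := by
  rw [intervalIntegral.integral_of_le hb]
  exact setIntegral_nonneg measurableSet_Ioc fun x hx => mul_nonneg hx.1.le (hfpos x hx.1).le

lemma swProb_mem_Icc (hη01 : ∀ t : ℝ, η t ∈ Set.Icc (0:ℝ) 1)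
    (c : Fin 2 → Fin N → ℝ) (n : Fin N) (i : Fin 2) :
    swProb η c n i ∈ Set.Icc (0:ℝ) 1 := by
  have h := hη01 (c 1 (rdown n) - c 0 (rdown n))
  unfold swProb
  split <;> constructor <;> linarith [h.1, h.2]

lemma bellObj_bddBelow (hp₀ : p₀ ∈ Set.Ioo (0:ℝ) 1) (hδ0 : 0 < δ)
    (hfpos : ∀ ℓ : ℝ, 0 < ℓ → 0 < fL ℓ) (hfint : IntegrableOn fL (Set.Ioi 0))
    (hftot : ∫ ℓ in Set.Ioi (0:ℝ), fL ℓ = 1 - p₀)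
    (c : Fin 2 → Fin N → ℝ) (v : Fin N × Fin 2 → ℝ) (x : Fin N × Fin 2) :
    BddBelow (Set.range fun b : {b : ℝ // 0 ≤ b} => bellObj p₀ δ fL η c v x b.1) := by
  refine ⟨δ * (c x.2 x.1 + min (Wdown η c v x.1 x.2) (Wup η c v x.1 x.2)), ?_⟩
  rintro y ⟨b, rfl⟩
  have hF := lossCdf_mem_Icc hp₀ hfpos hfint hftot b.2
  have hI := meanInt_nonneg hfpos b.2
  simp only [bellObj]
  set F := lossCdf p₀ fL b.1 with hFdef
  set Wd := Wdown η c v x.1 x.2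
  set Wu := Wup η c v x.1 x.2
  have h1 : F * min Wd Wu ≤ F * Wd := mul_le_mul_of_nonneg_left (min_le_left _ _) hF.1
  have h2 : (1 - F) * min Wd Wu ≤ (1 - F) * Wu :=
    mul_le_mul_of_nonneg_left (min_le_right _ _) (by linarith [hF.2])
  have key : c x.2 x.1 + min Wd Wu ≤
      c x.2 x.1 + (∫ ℓ in (0:ℝ)..b.1, ℓ * fL ℓ) + F * Wd + (1 - F) * Wu := by nlinarith
  exact mul_le_mul_of_nonneg_left key hδ0.le

lemma bellOp_le (hp₀ : p₀ ∈ Set.Ioo (0:ℝ) 1) (hδ0 : 0 < δ)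
    (hfpos : ∀ ℓ : ℝ, 0 < ℓ → 0 < fL ℓ) (hfint : IntegrableOn fL (Set.Ioi 0))
    (hftot : ∫ ℓ in Set.Ioi (0:ℝ), fL ℓ = 1 - p₀)
    (c c' : Fin 2 → Fin N → ℝ) (v w : Fin N × Fin 2 → ℝ) (x : Fin N × Fin 2)
    {A B : ℝ}
    (hA : c x.2 x.1 - c' x.2 x.1 ≤ A)
    (hd : Wdown η c v x.1 x.2 - Wdown η c' w x.1 x.2 ≤ B)
    (hu : Wup η c v x.1 x.2 - Wup η c' w x.1 x.2 ≤ B) :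
    bellOp p₀ δ fL η c v x ≤ bellOp p₀ δ fL η c' w x + δ * (A + B) := by
  haveI : Nonempty {b : ℝ // 0 ≤ b} := ⟨⟨0, le_rfl⟩⟩
  have hbdd := bellObj_bddBelow (η := η) hp₀ hδ0 hfpos hfint hftot c v x
  simp only [bellOp]
  have key : ∀ b : {b : ℝ // 0 ≤ b},
      (⨅ b : {b : ℝ // 0 ≤ b}, bellObj p₀ δ fL η c v x b.1) - δ * (A + B) ≤
        bellObj p₀ δ fL η c' w x b.1 := by
    intro b
    have h1 : (⨅ b : {b : ℝ // 0 ≤ b}, bellObj p₀ δ fL η c v x b.1) ≤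
        bellObj p₀ δ fL η c v x b.1 := ciInf_le hbdd b
    have hF := lossCdf_mem_Icc hp₀ hfpos hfint hftot b.2
    have hpt : bellObj p₀ δ fL η c v x b.1 ≤ bellObj p₀ δ fL η c' w x b.1 + δ * (A + B) := by
      simp only [bellObj]
      set F := lossCdf p₀ fL b.1
      have k1 : F * (Wdown η c v x.1 x.2 - Wdown η c' w x.1 x.2) ≤ F * B :=
        mul_le_mul_of_nonneg_left hd hF.1
      have k2 : (1 - F) * (Wup η c v x.1 x.2 - Wup η c' w x.1 x.2) ≤ (1 - F) * B :=
        mul_le_mul_of_nonneg_left hu (by linarith [hF.2])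
      nlinarith
    linarith
  linarith [le_ciInf key]

lemma Wdown_sub_le (hη01 : ∀ t : ℝ, η t ∈ Set.Icc (0:ℝ) 1)
    (c : Fin 2 → Fin N → ℝ) (v w : Fin N × Fin 2 → ℝ) (n : Fin N) (i : Fin 2) :
    Wdown η c v n i - Wdown η c w n i ≤ dist v w := by
  have hσ := swProb_mem_Icc hη01 c n i
  have h1 : |v (rdown n, i) - w (rdown n, i)| ≤ dist v w := by
    rw [← Real.dist_eq]; exact dist_le_pi_dist v w _
  have h2 : |v (rdown n, i + 1) - w (rdown n, i + 1)| ≤ dist v w := by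
    rw [← Real.dist_eq]; exact dist_le_pi_dist v w _
  have k1 := mul_le_mul_of_nonneg_left (abs_le.1 h1).2 (by linarith [hσ.2] : (0:ℝ) ≤ 1 - swProb η c n i)
  have k2 := mul_le_mul_of_nonneg_left (abs_le.1 h2).2 hσ.1
  simp only [Wdown]
  nlinarith

lemma Wup_sub_le (hη01 : ∀ t : ℝ, η t ∈ Set.Icc (0:ℝ) 1)
    (c : Fin 2 → Fin N → ℝ) (v w : Fin N × Fin 2 → ℝ) (n : Fin N) (i : Fin 2) :
    Wup η c v n i - Wup η c w n i ≤ dist v w := by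
  have hσ := swProb_mem_Icc hη01 c n i
  have h1 : |v (rup n, i) - w (rup n, i)| ≤ dist v w := by
    rw [← Real.dist_eq]; exact dist_le_pi_dist v w _
  have h2 : |v (rup n, i + 1) - w (rup n, i + 1)| ≤ dist v w := by
    rw [← Real.dist_eq]; exact dist_le_pi_dist v w _
  have k1 := mul_le_mul_of_nonneg_left (abs_le.1 h1).2 (by linarith [hσ.2] : (0:ℝ) ≤ 1 - swProb η c n i)
  have k2 := mul_le_mul_of_nonneg_left (abs_le.1 h2).2 hσ.1
  simp only [Wup]
  nlinarith

lemma continuous_swProb (hηc : Continuous η) (n : Fin N) (i : Fin 2) :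
    Continuous fun c : Fin 2 → Fin N → ℝ => swProb η c n i := by
  have h : Continuous fun c : Fin 2 → Fin N → ℝ => η (c 1 (rdown n) - c 0 (rdown n)) :=
    hηc.comp ((continuous_apply_apply (1 : Fin 2) (rdown n)).sub
      (continuous_apply_apply (0 : Fin 2) (rdown n)))
  unfold swProb
  by_cases hi : i = 0
  · simp only [if_pos hi]; exact continuous_const.sub h
  · simp only [if_neg hi]; exact h

end AuxLemmas

/-- for every admissible premium pair `c`, the Bellman operator has a
unique fixed point `V*_c`, and both the value function `c ↦ V*_c(n,i)` and the optimal
barrier `c ↦ max 0 (W↑(n,i;V*_c) − W↓(n,i;V*_c))` are continuous in `c`. -/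
theorem stmt_1 (N : ℕ) (p₀ δ μ M : ℝ) (fL η : ℝ → ℝ)
    (hN : 2 ≤ N) (hp₀ : p₀ ∈ Set.Ioo (0:ℝ) 1) (hδ : δ ∈ Set.Ioo (0:ℝ) 1)
    (hfc : ContinuousOn fL (Set.Ioi 0)) (hfpos : ∀ ℓ : ℝ, 0 < ℓ → 0 < fL ℓ)
    (hfint : IntegrableOn fL (Set.Ioi 0))
    (hftot : ∫ ℓ in Set.Ioi (0:ℝ), fL ℓ = 1 - p₀)
    (hmint : IntegrableOn (fun ℓ => ℓ * fL ℓ) (Set.Ioi 0))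
    (hμ : μ = ∫ ℓ in Set.Ioi (0:ℝ), ℓ * fL ℓ) (hμpos : 0 < μ) (hM : μ ≤ M)
    (hηc : Continuous η) (hηm : Monotone η) (hη01 : ∀ t : ℝ, η t ∈ Set.Icc (0:ℝ) 1) :
    ∃ V : (Fin 2 → Fin N → ℝ) → (Fin N × Fin 2 → ℝ),
      (∀ c ∈ premSet N μ M,
        bellOp p₀ δ fL η c (V c) = V c ∧
        ∀ v : Fin N × Fin 2 → ℝ, bellOp p₀ δ fL η c v = v → v = V c) ∧
      (∀ x : Fin N × Fin 2,
        ContinuousOn (fun c : Fin 2 → Fin N → ℝ => V c x) (premSet N μ M) ∧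
        ContinuousOn
          (fun c : Fin 2 → Fin N → ℝ =>
            max 0 (Wup η c (V c) x.1 x.2 - Wdown η c (V c) x.1 x.2))
          (premSet N μ M)) := by
  haveI : Nonempty {b : ℝ // 0 ≤ b} := ⟨⟨0, le_rfl⟩⟩
  set K : NNReal := ⟨δ, hδ.1.le⟩ with hK
  have hKδ : (K : ℝ) = δ := rfl
  -- the Bellman operator is a contraction for every premium pair
  have contr : ∀ c : Fin 2 → Fin N → ℝ, ContractingWith K (bellOp p₀ δ fL η c) := by
    intro c
    constructor
    · rw [← NNReal.coe_lt_coe, hKδ, NNReal.coe_one]; exact hδ.2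
    · refine LipschitzWith.of_dist_le_mul fun v w => ?_
      rw [hKδ]
      rw [dist_pi_le_iff (mul_nonneg hδ.1.le dist_nonneg)]
      intro x
      rw [Real.dist_eq, abs_sub_le_iff]
      have e1 : δ * (0 + dist v w) = δ * dist v w := by ring
      constructor
      · have := bellOp_le (η := η) hp₀ hδ.1 hfpos hfint hftot c c v w x
          (le_of_eq (sub_self _)) (Wdown_sub_le hη01 c v w x.1 x.2)
          (Wup_sub_le hη01 c v w x.1 x.2)
        rw [e1] at this; linarith
      · have hwv : dist w v = dist v w := dist_comm w v
        have := bellOp_le (η := η) hp₀ hδ.1 hfpos hfint hftot c c w v x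
          (le_of_eq (sub_self _)) ((Wdown_sub_le hη01 c w v x.1 x.2).trans_eq hwv)
          ((Wup_sub_le hη01 c w v x.1 x.2).trans_eq hwv)
        rw [e1] at this; linarith
  set V : (Fin 2 → Fin N → ℝ) → (Fin N × Fin 2 → ℝ) :=
    fun c => ContractingWith.fixedPoint (bellOp p₀ δ fL η c) (contr c) with hV
  have hfix : ∀ c, bellOp p₀ δ fL η c (V c) = V c :=
    fun c => (contr c).fixedPoint_isFixedPt
  -- continuity of the Bellman operator in the premiums, for fixed `v`
  have hΦcont : ∀ (v : Fin N × Fin 2 → ℝ) (x : Fin N × Fin 2),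
      Continuous fun c : Fin 2 → Fin N → ℝ => bellOp p₀ δ fL η c v x := by
    intro v x
    rw [continuous_iff_continuousAt]
    intro c₀
    set g : (Fin 2 → Fin N → ℝ) → ℝ := fun c =>
      δ * (|c x.2 x.1 - c₀ x.2 x.1| + (|Wdown η c v x.1 x.2 - Wdown η c₀ v x.1 x.2|
        + |Wup η c v x.1 x.2 - Wup η c₀ v x.1 x.2|)) with hg
    have hbound : ∀ c, |bellOp p₀ δ fL η c v x - bellOp p₀ δ fL η c₀ v x| ≤ g c := by
      intro c
      have bA2 : c₀ x.2 x.1 - c x.2 x.1 ≤ |c x.2 x.1 - c₀ x.2 x.1| := by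
        rw [abs_sub_comm]; exact le_abs_self _
      set B := |Wdown η c v x.1 x.2 - Wdown η c₀ v x.1 x.2|
        + |Wup η c v x.1 x.2 - Wup η c₀ v x.1 x.2| with hB
      have hd := abs_nonneg (Wdown η c v x.1 x.2 - Wdown η c₀ v x.1 x.2)
      have hu := abs_nonneg (Wup η c v x.1 x.2 - Wup η c₀ v x.1 x.2)
      have bd1 : Wdown η c v x.1 x.2 - Wdown η c₀ v x.1 x.2 ≤ B := by
        rw [hB]; linarith [le_abs_self (Wdown η c v x.1 x.2 - Wdown η c₀ v x.1 x.2)]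
      have bu1 : Wup η c v x.1 x.2 - Wup η c₀ v x.1 x.2 ≤ B := by
        rw [hB]; linarith [le_abs_self (Wup η c v x.1 x.2 - Wup η c₀ v x.1 x.2)]
      have bd2 : Wdown η c₀ v x.1 x.2 - Wdown η c v x.1 x.2 ≤ B := by
        rw [hB]; linarith [neg_abs_le (Wdown η c v x.1 x.2 - Wdown η c₀ v x.1 x.2)]
      have bu2 : Wup η c₀ v x.1 x.2 - Wup η c v x.1 x.2 ≤ B := by
        rw [hB]; linarith [neg_abs_le (Wup η c v x.1 x.2 - Wup η c₀ v x.1 x.2)]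
      have h1 := bellOp_le (η := η) hp₀ hδ.1 hfpos hfint hftot c c₀ v v x
        (le_abs_self _) bd1 bu1
      have h2 := bellOp_le (η := η) hp₀ hδ.1 hfpos hfint hftot c₀ c v v x
        bA2 bd2 bu2
      rw [abs_sub_le_iff]
      rw [hB] at h1 h2
      constructor <;> · simp only [hg]; linarith
    have hWd : Continuous fun c : Fin 2 → Fin N → ℝ => Wdown η c v x.1 x.2 := by
      simp only [Wdown]
      exact ((continuous_const.sub (continuous_swProb hηc x.1 x.2)).mul continuous_const).add
        ((continuous_swProb hηc x.1 x.2).mul continuous_const)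
    have hWu : Continuous fun c : Fin 2 → Fin N → ℝ => Wup η c v x.1 x.2 := by
      simp only [Wup]
      exact ((continuous_const.sub (continuous_swProb hηc x.1 x.2)).mul continuous_const).add
        ((continuous_swProb hηc x.1 x.2).mul continuous_const)
    have hgc : Continuous g := by
      refine continuous_const.mul (Continuous.add ?_ (Continuous.add ?_ ?_))
      · exact ((continuous_apply_apply x.2 x.1).sub continuous_const).abs
      · exact (hWd.sub continuous_const).abs
      · exact (hWu.sub continuous_const).abs
    have hg0 : g c₀ = 0 := by simp [hg]
    have htz : Filter.Tendsto (fun c => bellOp p₀ δ fL η c v x - bellOp p₀ δ fL η c₀ v x)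
        (nhds c₀) (nhds 0) := by
      refine squeeze_zero_norm (a := g) (fun c => ?_) ?_
      · simpa [Real.norm_eq_abs] using hbound c
      · have := hgc.tendsto c₀; rwa [hg0] at this
    have := htz.add_const (bellOp p₀ δ fL η c₀ v x)
    simpa [ContinuousAt] using this
  -- quantitative stability of the fixed point
  have hdistV : ∀ c c₀, dist (V c) (V c₀) ≤
      dist (bellOp p₀ δ fL η c (V c₀)) (V c₀) / (1 - δ) := by
    intro c c₀
    have h1 : dist (bellOp p₀ δ fL η c (V c)) (bellOp p₀ δ fL η c (V c₀)) ≤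
        δ * dist (V c) (V c₀) := by
      have := (contr c).2.dist_le_mul (V c) (V c₀)
      rwa [hKδ] at this
    have h2 := dist_triangle (bellOp p₀ δ fL η c (V c)) (bellOp p₀ δ fL η c (V c₀)) (V c₀)
    rw [hfix c] at h2
    have h3 := dist_triangle (V c) (bellOp p₀ δ fL η c (V c₀)) (V c₀)
    rw [le_div_iff₀ (by linarith [hδ.2])]
    have h4 := dist_triangle (V c) (V c₀) (bellOp p₀ δ fL η c (V c₀))
    -- dist (V c) (V c₀) ≤ dist (V c) (bellOp c (V c₀)) + dist (bellOp c (V c₀)) (V c₀)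
    have h5 : dist (V c) (bellOp p₀ δ fL η c (V c₀)) ≤ δ * dist (V c) (V c₀) := by
      calc dist (V c) (bellOp p₀ δ fL η c (V c₀))
          = dist (bellOp p₀ δ fL η c (V c)) (bellOp p₀ δ fL η c (V c₀)) := by rw [hfix c]
        _ ≤ δ * dist (V c) (V c₀) := h1
    nlinarith [h3, h5]
  -- continuity of the value function in the premiums
  have hVcont : ∀ x : Fin N × Fin 2, Continuous fun c => V c x := by
    have hVd : ∀ c₀, Filter.Tendsto (fun c => dist (bellOp p₀ δ fL η c (V c₀)) (V c₀))
        (nhds c₀) (nhds 0) := by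
      intro c₀
      have h1 : Continuous fun c => bellOp p₀ δ fL η c (V c₀) :=
        continuous_pi fun x => hΦcont (V c₀) x
      have h2 := (h1.dist (continuous_const (y := V c₀))).tendsto c₀
      rwa [hfix c₀, dist_self] at h2
    intro x
    rw [continuous_iff_continuousAt]
    intro c₀
    have hb : ∀ c, |V c x - V c₀ x| ≤
        dist (bellOp p₀ δ fL η c (V c₀)) (V c₀) / (1 - δ) := by
      intro c
      refine le_trans ?_ (hdistV c c₀)
      rw [← Real.dist_eq]; exact dist_le_pi_dist _ _ x
    have htz : Filter.Tendsto (fun c => V c x - V c₀ x) (nhds c₀) (nhds 0) := by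
      refine squeeze_zero_norm
        (a := fun c => dist (bellOp p₀ δ fL η c (V c₀)) (V c₀) / (1 - δ))
        (fun c => by simpa [Real.norm_eq_abs] using hb c) ?_
      have := (hVd c₀).div_const (1 - δ)
      simpa using this
    have := htz.add_const (V c₀ x)
    simpa [ContinuousAt] using this
  refine ⟨V, fun c _ => ⟨hfix c, fun v hv => (contr c).fixedPoint_unique hv⟩, fun x => ?_⟩
  constructor
  · exact (hVcont x).continuousOn
  · have hσc := continuous_swProb (N := N) hηc x.1 x.2
    have hWu : Continuous fun c => Wup η c (V c) x.1 x.2 := by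
      simp only [Wup]
      exact ((continuous_const.sub hσc).mul (hVcont _)).add (hσc.mul (hVcont _))
    have hWd : Continuous fun c => Wdown η c (V c) x.1 x.2 := by
      simp only [Wdown]
      exact ((continuous_const.sub hσc).mul (hVcont _)).add (hσc.mul (hVcont _))
    exact (continuous_const.max (hWu.sub hWd)).continuousOn

end
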